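/- For every integer n ≥ 2, the bondage number of the path on n vertices is b(P_n) = 2 if n ≡ 1 (mod 3), and b(P_n) = 1 otherwise. -/

import Mathlib

set_option maxHeartbeats 1000000


/-- A finite set of vertices `D` is a dominating set of `G` if every vertex
is in `D` or adjacent to a vertex in `D`. -/
def SimpleGraph.IsDominatingSet {V : Type*} (G : SimpleGraph V) (D : Finset V) : Prop :=
  ∀ v : V, v ∈ D ∨ ∃ u ∈ D, G.Adj u v

/-- The domination number of `G`: the minimum cardinality of a dominating set. -/
noncomputable def SimpleGraph.domNum {V : Type*} (G : SimpleGraph V) : ℕ :=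
  sInf {n : ℕ | ∃ D : Finset V, G.IsDominatingSet D ∧ D.card = n}

/-- The `k`-synchronous bondage number of `G`: the minimum cardinality of a set of edges
whose deletion increases the domination number by exactly `k`.  (`Sb 1` is the classical
bondage number.) -/
noncomputable def SimpleGraph.synchBondage {V : Type*} (G : SimpleGraph V) (k : ℕ) : ℕ :=
  sInf {m : ℕ | ∃ E' : Finset (Sym2 V), ↑E' ⊆ G.edgeSet ∧
    (G.deleteEdges ↑E').domNum = G.domNum + k ∧ E'.card = m}

open Finset SimpleGraph

lemma domNum_le {V : Type*} [Fintype V] (G : SimpleGraph V) (D : Finset V)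
    (h : G.IsDominatingSet D) : G.domNum ≤ D.card := Nat.sInf_le ⟨D, h, rfl⟩

lemma le_domNum {V : Type*} [Fintype V] (G : SimpleGraph V) (m : ℕ)
    (h : ∀ D : Finset V, G.IsDominatingSet D → m ≤ D.card) : m ≤ G.domNum :=
  le_csInf ⟨Fintype.card V, Finset.univ, fun v => Or.inl (mem_univ v), card_univ⟩
    (fun _ ⟨D, hD, hc⟩ => hc ▸ h D hD)

lemma count_lemma {n : ℕ} (G : SimpleGraph (Fin n)) (D : Finset (Fin n))
    (hD : G.IsDominatingSet D) (T : Fin n → Finset (Fin n)) (f : Fin n → ℕ)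
    (hT : ∀ v ∈ D, ∀ u, (u = v ∨ G.Adj v u) → u ∈ T v)
    (hTc : ∀ v ∈ D, (T v).card ≤ f v) :
    n ≤ ∑ v ∈ D, f v := by
  classical
  calc n = (Finset.univ : Finset (Fin n)).card := by simp
    _ ≤ (D.biUnion T).card := Finset.card_le_card (fun v _ => by
        rcases hD v with h | ⟨u, hu, hadj⟩
        · exact Finset.mem_biUnion.2 ⟨v, h, hT v h v (Or.inl rfl)⟩
        · exact Finset.mem_biUnion.2 ⟨u, hu, hT u hu v (Or.inr hadj)⟩)
    _ ≤ ∑ v ∈ D, (T v).card := Finset.card_biUnion_le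
    _ ≤ ∑ v ∈ D, f v := Finset.sum_le_sum hTc

def T3 {n : ℕ} (v : Fin n) : Finset (Fin n) :=
  Finset.univ.filter (fun u => u.val = v.val ∨ u.val = v.val + 1 ∨ u.val + 1 = v.val)

lemma T3_card {n : ℕ} (v : Fin n) : (T3 v).card ≤ 3 := by
  have h : (T3 v).card ≤ ({v.val, v.val + 1, v.val - 1} : Finset ℕ).card := by
    apply Finset.card_le_card_of_injOn Fin.val
    · intro u hu
      simp only [Finset.mem_coe, T3, Finset.mem_filter] at hu
      simp only [Finset.mem_coe, Finset.mem_insert, Finset.mem_singleton]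
      omega
    · exact fun a _ b _ h => Fin.ext h
  calc (T3 v).card ≤ _ := h
    _ ≤ 3 := by
      apply le_trans (Finset.card_insert_le _ _)
      have := Finset.card_insert_le (v.val+1) ({v.val - 1} : Finset ℕ)
      simp at this ⊢; omega

lemma mem_T3 {n : ℕ} (s : Set (Sym2 (Fin n))) (v u : Fin n)
    (h : u = v ∨ ((pathGraph n).deleteEdges s).Adj v u) : u ∈ T3 v := by
  simp only [T3, Finset.mem_filter, Finset.mem_univ, true_and]
  rcases h with rfl | h
  · left; rfl
  · rcases (pathGraph_adj.1 h.1) with h' | h' <;> omega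

lemma sum_const_3 {n : ℕ} (D : Finset (Fin n)) : ∑ _v ∈ D, 3 = 3 * D.card := by
  rw [Finset.sum_const, smul_eq_mul, mul_comm]

lemma domNum_path {n : ℕ} (hn : 1 ≤ n) : (pathGraph n).domNum = (n + 2) / 3 := by
  have hlt : ∀ j : ℕ, min (3 * j + 1) (n - 1) < n := fun j => by omega
  set f : ℕ → Fin n := fun j => ⟨min (3 * j + 1) (n - 1), hlt j⟩ with hf
  apply le_antisymm
  · have hdom : (pathGraph n).IsDominatingSet (Finset.image f (Finset.range ((n + 2) / 3))) := by
      intro v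
      have hj : v.val / 3 ∈ Finset.range ((n + 2) / 3) := by
        simp only [Finset.mem_range]; omega
      by_cases hv : min (3 * (v.val / 3) + 1) (n - 1) = v.val
      · exact Or.inl (Finset.mem_image.2 ⟨v.val / 3, hj, Fin.ext hv⟩)
      · refine Or.inr ⟨f (v.val / 3), Finset.mem_image_of_mem f hj, pathGraph_adj.2 ?_⟩
        simp only [hf]
        have := v.isLt
        omega
    have hle := domNum_le _ _ hdom
    have hcard : (Finset.image f (Finset.range ((n + 2) / 3))).card ≤ (n + 2) / 3 :=
      le_trans (Finset.card_image_le) (by simp)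
    omega
  · apply le_domNum
    intro D hD
    have := count_lemma _ D hD T3 (fun _ => 3)
      (fun v _ u h => mem_T3 ∅ v u (by simpa using h)) (fun v _ => T3_card v)
    rw [sum_const_3] at this
    omega

lemma sum_ite_mem {n : ℕ} (D S : Finset (Fin n)) (hS : S ⊆ D) :
    ∑ v ∈ D, (if v ∈ S then 1 else 3) = 3 * D.card - 2 * S.card := by
  classical
  rw [← Finset.sum_sdiff hS]
  have h1 : ∑ v ∈ D \ S, (if v ∈ S then 1 else 3) = 3 * (D.card - S.card) := by
    rw [Finset.sum_congr rfl (fun v hv => if_neg (Finset.mem_sdiff.1 hv).2),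
      Finset.sum_const, smul_eq_mul, Finset.card_sdiff_of_subset hS, mul_comm]
  have h2 : ∑ v ∈ S, (if v ∈ S then 1 else 3) = S.card := by
    rw [Finset.sum_congr rfl (fun v hv => if_pos hv), Finset.sum_const, smul_eq_mul, mul_one]
  have := Finset.card_le_card hS
  omega

lemma domNum_A {n : ℕ} (hn : 2 ≤ n) :
    ((pathGraph n).deleteEdges
      {s((⟨0, by omega⟩ : Fin n), (⟨1, by omega⟩ : Fin n))}).domNum = (n + 4) / 3 := by
  obtain ⟨G, hG⟩ : ∃ G', (pathGraph n).deleteEdges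
      {s((⟨0, by omega⟩ : Fin n), (⟨1, by omega⟩ : Fin n))} = G' := ⟨_, rfl⟩
  rw [hG]
  have hadj : ∀ u v : Fin n, G.Adj u v ↔
      ((u.val + 1 = v.val ∨ v.val + 1 = u.val) ∧ ¬(u.val ≤ 1 ∧ v.val ≤ 1)) := by
    intro u v
    rw [← hG, deleteEdges_adj, pathGraph_adj]
    simp only [Set.mem_singleton_iff, Sym2.eq_iff, Fin.ext_iff]
    omega
  apply le_antisymm
  · -- upper bound
    have hlt : ∀ j : ℕ, min (3 * j + 2) (n - 1) < n := fun j => by omega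
    obtain ⟨D, hD⟩ : ∃ D' : Finset (Fin n), insert (⟨0, by omega⟩ : Fin n)
        (Finset.image (fun j => (⟨min (3 * j + 2) (n - 1), hlt j⟩ : Fin n))
          (Finset.range ((n + 1) / 3))) = D' := ⟨_, rfl⟩
    have hmem0 : (⟨0, by omega⟩ : Fin n) ∈ D := by
      rw [← hD]; exact Finset.mem_insert_self _ _
    have hmemD : ∀ (w : ℕ) (hw : w < n), (∃ j, j < (n + 1) / 3 ∧ min (3 * j + 2) (n - 1) = w) →
        (⟨w, hw⟩ : Fin n) ∈ D := by
      rintro w hw ⟨j, hj1, hj2⟩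
      rw [← hD]
      exact Finset.mem_insert.2 (Or.inr
        (Finset.mem_image.2 ⟨j, Finset.mem_range.2 hj1, Fin.ext hj2⟩))
    have hdom : G.IsDominatingSet D := by
      intro v
      by_cases h0 : v.val = 0
      · refine Or.inl ?_
        have hveq : v = ⟨0, by omega⟩ := Fin.ext h0
        rw [hveq]; exact hmem0
      have hvlt := v.isLt
      by_cases hv : min (3 * ((v.val - 1) / 3) + 2) (n - 1) = v.val
      · exact Or.inl (hmemD v.val hvlt ⟨(v.val - 1) / 3, by omega, hv⟩)
      · have hwlt : min (3 * ((v.val - 1) / 3) + 2) (n - 1) < n := hlt _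
        refine Or.inr ⟨_, hmemD _ hwlt ⟨(v.val - 1) / 3, by omega, rfl⟩, (hadj _ _).2 ?_⟩
        show (min (3 * ((v.val - 1) / 3) + 2) (n - 1) + 1 = (v : ℕ) ∨
            (v : ℕ) + 1 = min (3 * ((v.val - 1) / 3) + 2) (n - 1)) ∧
          ¬(min (3 * ((v.val - 1) / 3) + 2) (n - 1) ≤ 1 ∧ (v : ℕ) ≤ 1)
        omega
    have hle := domNum_le _ _ hdom
    have hcard : D.card ≤ 1 + (n + 1) / 3 := by
      rw [← hD]
      refine le_trans (Finset.card_insert_le _ _) ?_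
      have := Finset.card_image_le
        (f := fun j => (⟨min (3 * j + 2) (n - 1), hlt j⟩ : Fin n))
        (s := Finset.range ((n + 1) / 3))
      simp only [Finset.card_range] at this
      omega
    omega
  · -- lower bound
    apply le_domNum
    intro D hD
    classical
    set z0 : Fin n := ⟨0, by omega⟩ with hz0
    have hz0D : z0 ∈ D := by
      rcases hD z0 with h | ⟨u, _, h⟩
      · exact h
      · exfalso
        rw [hadj] at h
        have := u.isLt
        have : (z0 : ℕ) = 0 := rfl
        omega
    have hiso : ∀ u : Fin n, ¬ G.Adj z0 u := by
      intro u h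
      rw [hadj] at h
      have : (z0 : ℕ) = 0 := rfl
      omega
    have key := count_lemma G D hD
      (fun v => if v ∈ ({z0} : Finset (Fin n)) then {z0} else T3 v)
      (fun v => if v ∈ ({z0} : Finset (Fin n)) then 1 else 3)
      (fun v _ u h => by
        show u ∈ (if v ∈ ({z0} : Finset (Fin n)) then {z0} else T3 v)
        by_cases hv : v ∈ ({z0} : Finset (Fin n))
        · rw [if_pos hv]
          rcases h with rfl | h
          · exact hv
          · exact absurd h (by rw [Finset.mem_singleton] at hv; rw [hv]; exact hiso u)
        · rw [if_neg hv]
          rcases h with rfl | h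
          · exact mem_T3 ∅ u u (Or.inl rfl)
          · refine mem_T3 {s((⟨0, by omega⟩ : Fin n), (⟨1, by omega⟩ : Fin n))} v u
              (Or.inr ?_)
            rw [← hG] at h
            exact h)
      (fun v _ => by
        show (if v ∈ ({z0} : Finset (Fin n)) then ({z0} : Finset (Fin n)) else T3 v).card ≤
          (if v ∈ ({z0} : Finset (Fin n)) then 1 else 3)
        by_cases hv : v ∈ ({z0} : Finset (Fin n))
        · simp [hv]
        · rw [if_neg hv, if_neg hv]; exact T3_card v)
    rw [sum_ite_mem D {z0} (Finset.singleton_subset_iff.2 hz0D)] at key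
    simp only [Finset.card_singleton] at key
    have hc1 : 1 ≤ D.card := Finset.card_pos.2 ⟨z0, hz0D⟩
    omega

lemma domNum_B {n : ℕ} (hn : 4 ≤ n) (h3 : n % 3 = 1) :
    ((pathGraph n).deleteEdges
      {s((⟨0, by omega⟩ : Fin n), (⟨1, by omega⟩ : Fin n)),
       s((⟨1, by omega⟩ : Fin n), (⟨2, by omega⟩ : Fin n))}).domNum = (n + 7) / 3 := by
  obtain ⟨G, hG⟩ : ∃ G', (pathGraph n).deleteEdges
      {s((⟨0, by omega⟩ : Fin n), (⟨1, by omega⟩ : Fin n)),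
       s((⟨1, by omega⟩ : Fin n), (⟨2, by omega⟩ : Fin n))} = G' := ⟨_, rfl⟩
  rw [hG]
  have hadj : ∀ u v : Fin n, G.Adj u v ↔
      ((u.val + 1 = v.val ∨ v.val + 1 = u.val) ∧ ¬(u.val ≤ 2 ∧ v.val ≤ 2)) := by
    intro u v
    rw [← hG, deleteEdges_adj, pathGraph_adj]
    simp only [Set.mem_insert_iff, Set.mem_singleton_iff, Sym2.eq_iff, Fin.ext_iff]
    omega
  apply le_antisymm
  · -- upper bound
    have hlt : ∀ j, j ∈ Finset.range ((n - 1) / 3) → 3 * j + 3 < n := by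
      intro j hj; simp only [Finset.mem_range] at hj; omega
    obtain ⟨D, hD⟩ : ∃ D' : Finset (Fin n), insert (⟨0, by omega⟩ : Fin n)
        (insert (⟨1, by omega⟩ : Fin n)
          ((Finset.range ((n - 1) / 3)).attach.image
            (fun j => (⟨3 * j.1 + 3, hlt j.1 j.2⟩ : Fin n)))) = D' := ⟨_, rfl⟩
    have hmem0 : (⟨0, by omega⟩ : Fin n) ∈ D := by
      rw [← hD]; exact Finset.mem_insert_self _ _
    have hmem1 : (⟨1, by omega⟩ : Fin n) ∈ D := by
      rw [← hD]; exact Finset.mem_insert.2 (Or.inr (Finset.mem_insert_self _ _))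
    have hmemD : ∀ (w : ℕ) (hw : w < n), (∃ j, j < (n - 1) / 3 ∧ 3 * j + 3 = w) →
        (⟨w, hw⟩ : Fin n) ∈ D := by
      rintro w hw ⟨j, hj1, hj2⟩
      rw [← hD]
      exact Finset.mem_insert.2 (Or.inr (Finset.mem_insert.2 (Or.inr
        (Finset.mem_image.2 ⟨⟨j, Finset.mem_range.2 hj1⟩, Finset.mem_attach _ _,
          Fin.ext hj2⟩))))
    have hdom : G.IsDominatingSet D := by
      intro v
      by_cases h0 : v.val = 0
      · refine Or.inl ?_
        have hveq : v = ⟨0, by omega⟩ := Fin.ext h0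
        rw [hveq]; exact hmem0
      by_cases h1 : v.val = 1
      · refine Or.inl ?_
        have hveq : v = ⟨1, by omega⟩ := Fin.ext h1
        rw [hveq]; exact hmem1
      have hvlt := v.isLt
      by_cases hv : 3 * ((v.val - 2) / 3) + 3 = v.val
      · exact Or.inl (hmemD v.val hvlt ⟨(v.val - 2) / 3, by omega, hv⟩)
      · have hwlt : 3 * ((v.val - 2) / 3) + 3 < n := by omega
        refine Or.inr ⟨_, hmemD _ hwlt ⟨(v.val - 2) / 3, by omega, rfl⟩, (hadj _ _).2 ?_⟩
        show (3 * ((v.val - 2) / 3) + 3 + 1 = (v : ℕ) ∨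
            (v : ℕ) + 1 = 3 * ((v.val - 2) / 3) + 3) ∧
          ¬(3 * ((v.val - 2) / 3) + 3 ≤ 2 ∧ (v : ℕ) ≤ 2)
        omega
    have hle := domNum_le _ _ hdom
    have hcard : D.card ≤ 2 + (n - 1) / 3 := by
      rw [← hD]
      refine le_trans (Finset.card_insert_le _ _) ?_
      have h2 := Finset.card_insert_le (⟨1, by omega⟩ : Fin n)
        ((Finset.range ((n - 1) / 3)).attach.image
          (fun j => (⟨3 * j.1 + 3, hlt j.1 j.2⟩ : Fin n)))
      have h4 := Finset.card_image_le (f := fun j => (⟨3 * j.1 + 3, hlt j.1 j.2⟩ : Fin n))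
        (s := (Finset.range ((n - 1) / 3)).attach)
      rw [Finset.card_attach, Finset.card_range] at h4
      omega
    omega
  · -- lower bound
    apply le_domNum
    intro D hD
    classical
    set z0 : Fin n := ⟨0, by omega⟩ with hz0
    set z1 : Fin n := ⟨1, by omega⟩ with hz1
    have hvz0 : (z0 : ℕ) = 0 := rfl
    have hvz1 : (z1 : ℕ) = 1 := rfl
    have hz0D : z0 ∈ D := by
      rcases hD z0 with h | ⟨u, _, h⟩
      · exact h
      · exfalso; rw [hadj] at h; have := u.isLt; omega
    have hz1D : z1 ∈ D := by
      rcases hD z1 with h | ⟨u, _, h⟩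
      · exact h
      · exfalso; rw [hadj] at h; have := u.isLt; omega
    have hiso : ∀ v : Fin n, v ∈ ({z0, z1} : Finset (Fin n)) → ∀ u : Fin n, ¬ G.Adj v u := by
      intro v hv u h
      rw [hadj] at h
      rcases Finset.mem_insert.1 hv with rfl | hv
      · omega
      · rw [Finset.mem_singleton] at hv; subst hv; omega
    have key := count_lemma G D hD
      (fun v => if v ∈ ({z0, z1} : Finset (Fin n)) then {v} else T3 v)
      (fun v => if v ∈ ({z0, z1} : Finset (Fin n)) then 1 else 3)
      (fun v _ u h => by
        show u ∈ (if v ∈ ({z0, z1} : Finset (Fin n)) then {v} else T3 v)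
        by_cases hv : v ∈ ({z0, z1} : Finset (Fin n))
        · rw [if_pos hv]
          rcases h with rfl | h
          · exact Finset.mem_singleton_self u
          · exact absurd h (hiso v hv u)
        · rw [if_neg hv]
          rcases h with rfl | h
          · exact mem_T3 ∅ u u (Or.inl rfl)
          · refine mem_T3
              {s((⟨0, by omega⟩ : Fin n), (⟨1, by omega⟩ : Fin n)),
               s((⟨1, by omega⟩ : Fin n), (⟨2, by omega⟩ : Fin n))} v u (Or.inr ?_)
            rw [← hG] at h
            exact h)
      (fun v _ => by
        show (if v ∈ ({z0, z1} : Finset (Fin n)) then ({v} : Finset (Fin n)) else T3 v).card ≤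
          (if v ∈ ({z0, z1} : Finset (Fin n)) then 1 else 3)
        by_cases hv : v ∈ ({z0, z1} : Finset (Fin n))
        · simp [hv]
        · rw [if_neg hv, if_neg hv]; exact T3_card v)
    have hsub : ({z0, z1} : Finset (Fin n)) ⊆ D := by
      intro x hx
      rcases Finset.mem_insert.1 hx with rfl | hx
      · exact hz0D
      · rw [Finset.mem_singleton] at hx; subst hx; exact hz1D
    rw [sum_ite_mem D {z0, z1} hsub] at key
    have hcard2 : ({z0, z1} : Finset (Fin n)).card = 2 := by
      rw [Finset.card_insert_of_notMem, Finset.card_singleton]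
      rw [Finset.mem_singleton]
      intro h
      exact absurd (congrArg Fin.val h) (by omega)
    rw [hcard2] at key
    have hc2 : 2 ≤ D.card := by
      calc 2 = ({z0, z1} : Finset (Fin n)).card := hcard2.symm
        _ ≤ D.card := Finset.card_le_card hsub
    omega

lemma domNum_C {n : ℕ} (h3 : n % 3 = 1) (a b : Fin n) (hab : (a : ℕ) + 1 = (b : ℕ)) :
    ((pathGraph n).deleteEdges {s(a, b)}).domNum ≤ (n + 2) / 3 := by
  obtain ⟨G, hG⟩ : ∃ G', (pathGraph n).deleteEdges {s(a, b)} = G' := ⟨_, rfl⟩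
  rw [hG]
  have hbn := b.isLt
  have hin : (a : ℕ) + 1 < n := by
    have : (b : ℕ) < n := b.isLt
    omega
  have hadj : ∀ u v : Fin n, G.Adj u v ↔
      ((u.val + 1 = v.val ∨ v.val + 1 = u.val) ∧
        ¬((u.val = (a : ℕ) ∧ v.val = (a : ℕ) + 1) ∨
          (u.val = (a : ℕ) + 1 ∧ v.val = (a : ℕ)))) := by
    intro u v
    rw [← hG, deleteEdges_adj, pathGraph_adj]
    simp only [Set.mem_singleton_iff, Sym2.eq_iff, Fin.ext_iff, ← hab]
    try omega
  set i : ℕ := (a : ℕ) with hi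
  have hlt1 : ∀ j : ℕ, min (3 * j + 1) i < n := fun j => by omega
  have hlt2 : ∀ j : ℕ, min (i + 2 + 3 * j) (n - 1) < n := fun j => by omega
  obtain ⟨D, hD⟩ : ∃ D' : Finset (Fin n),
      (Finset.image (fun j => (⟨min (3 * j + 1) i, hlt1 j⟩ : Fin n))
        (Finset.range ((i + 3) / 3))) ∪
      (Finset.image (fun j => (⟨min (i + 2 + 3 * j) (n - 1), hlt2 j⟩ : Fin n))
        (Finset.range ((n - i + 1) / 3))) = D' := ⟨_, rfl⟩
  have hmemL : ∀ (w : ℕ) (hw : w < n), (∃ j, j < (i + 3) / 3 ∧ min (3 * j + 1) i = w) →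
      (⟨w, hw⟩ : Fin n) ∈ D := by
    rintro w hw ⟨j, hj1, hj2⟩
    rw [← hD]
    exact Finset.mem_union_left _
      (Finset.mem_image.2 ⟨j, Finset.mem_range.2 hj1, Fin.ext hj2⟩)
  have hmemR : ∀ (w : ℕ) (hw : w < n),
      (∃ j, j < (n - i + 1) / 3 ∧ min (i + 2 + 3 * j) (n - 1) = w) →
      (⟨w, hw⟩ : Fin n) ∈ D := by
    rintro w hw ⟨j, hj1, hj2⟩
    rw [← hD]
    exact Finset.mem_union_right _
      (Finset.mem_image.2 ⟨j, Finset.mem_range.2 hj1, Fin.ext hj2⟩)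
  have hdom : G.IsDominatingSet D := by
    intro v
    have hvlt := v.isLt
    by_cases hside : v.val ≤ i
    · by_cases hv : min (3 * (v.val / 3) + 1) i = v.val
      · exact Or.inl (hmemL v.val hvlt ⟨v.val / 3, by omega, hv⟩)
      · have hwlt := hlt1 (v.val / 3)
        refine Or.inr ⟨_, hmemL _ hwlt ⟨v.val / 3, by omega, rfl⟩, (hadj _ _).2 ?_⟩
        show (min (3 * (v.val / 3) + 1) i + 1 = (v : ℕ) ∨
            (v : ℕ) + 1 = min (3 * (v.val / 3) + 1) i) ∧
          ¬((min (3 * (v.val / 3) + 1) i = i ∧ (v : ℕ) = i + 1) ∨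
            (min (3 * (v.val / 3) + 1) i = i + 1 ∧ (v : ℕ) = i))
        omega
    · by_cases hv : min (i + 2 + 3 * ((v.val - i - 1) / 3)) (n - 1) = v.val
      · exact Or.inl (hmemR v.val hvlt ⟨(v.val - i - 1) / 3, by omega, hv⟩)
      · have hwlt := hlt2 ((v.val - i - 1) / 3)
        refine Or.inr ⟨_, hmemR _ hwlt ⟨(v.val - i - 1) / 3, by omega, rfl⟩, (hadj _ _).2 ?_⟩
        show (min (i + 2 + 3 * ((v.val - i - 1) / 3)) (n - 1) + 1 = (v : ℕ) ∨
            (v : ℕ) + 1 = min (i + 2 + 3 * ((v.val - i - 1) / 3)) (n - 1)) ∧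
          ¬((min (i + 2 + 3 * ((v.val - i - 1) / 3)) (n - 1) = i ∧ (v : ℕ) = i + 1) ∨
            (min (i + 2 + 3 * ((v.val - i - 1) / 3)) (n - 1) = i + 1 ∧ (v : ℕ) = i))
        omega
  have hle := domNum_le _ _ hdom
  have hcard : D.card ≤ (n + 2) / 3 := by
    rw [← hD]
    refine le_trans (Finset.card_union_le _ _) ?_
    have c1 := Finset.card_image_le (f := fun j => (⟨min (3 * j + 1) i, hlt1 j⟩ : Fin n))
      (s := Finset.range ((i + 3) / 3))
    have c2 := Finset.card_image_le
      (f := fun j => (⟨min (i + 2 + 3 * j) (n - 1), hlt2 j⟩ : Fin n))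
      (s := Finset.range ((n - i + 1) / 3))
    simp only [Finset.card_range] at c1 c2
    omega
  omega

/-- the bondage number of the path `P_n` (`n ≥ 2`) is `2` if
`n ≡ 1 (mod 3)` and `1` otherwise. -/
theorem bondage_pathGraph (n : ℕ) (hn : 2 ≤ n) :
    (SimpleGraph.pathGraph n).synchBondage 1 = if n % 3 = 1 then 2 else 1 := by
  classical
  rw [SimpleGraph.synchBondage]
  set S : Set ℕ := {m : ℕ | ∃ E' : Finset (Sym2 (Fin n)), ↑E' ⊆ (pathGraph n).edgeSet ∧
    ((pathGraph n).deleteEdges ↑E').domNum = (pathGraph n).domNum + 1 ∧ E'.card = m} with hS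
  have hdp : (pathGraph n).domNum = (n + 2) / 3 := domNum_path (by omega)
  have h0 : 0 ∉ S := by
    rintro ⟨E', hsub, hdel, hcard⟩
    rw [Finset.card_eq_zero.1 hcard] at hdel
    simp only [Finset.coe_empty, SimpleGraph.deleteEdges_empty] at hdel
    omega
  by_cases h3 : n % 3 = 1
  · -- answer 2
    rw [if_pos h3]
    have hn4 : 4 ≤ n := by omega
    have h2 : 2 ∈ S := by
      refine ⟨{s((⟨0, by omega⟩ : Fin n), (⟨1, by omega⟩ : Fin n)),
               s((⟨1, by omega⟩ : Fin n), (⟨2, by omega⟩ : Fin n))}, ?_, ?_, ?_⟩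
      · intro e he
        simp only [Finset.coe_insert, Finset.coe_singleton, Set.mem_insert_iff,
          Set.mem_singleton_iff] at he
        rcases he with rfl | rfl <;>
          exact (SimpleGraph.mem_edgeSet _).2 (pathGraph_adj.2 (Or.inl rfl))
      · rw [hdp]
        have := domNum_B hn4 h3
        simp only [Finset.coe_insert, Finset.coe_singleton] at this ⊢
        rw [this]
        omega
      · rw [Finset.card_insert_of_notMem, Finset.card_singleton]
        rw [Finset.mem_singleton]
        intro h
        rw [Sym2.eq_iff] at h
        rcases h with ⟨h1, h2⟩ | ⟨h1, h2⟩ <;>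
          exact absurd (congrArg Fin.val h1) (by simp)
    have h1 : 1 ∉ S := by
      rintro ⟨E', hsub, hdel, hcard⟩
      obtain ⟨e, rfl⟩ := Finset.card_eq_one.1 hcard
      rw [Finset.coe_singleton] at hsub hdel
      induction e using Sym2.ind with
      | _ u v =>
        have hadj : (pathGraph n).Adj u v :=
          (SimpleGraph.mem_edgeSet _).1 (hsub (Set.mem_singleton _))
        rw [pathGraph_adj] at hadj
        rcases hadj with h | h
        · have := domNum_C h3 u v h
          omega
        · have := domNum_C h3 v u h
          rw [Sym2.eq_swap (a := u) (b := v)] at hdel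
          omega
    have hne : S.Nonempty := ⟨2, h2⟩
    have hmem := Nat.sInf_mem hne
    have hle := Nat.sInf_le h2
    have hne0 : sInf S ≠ 0 := fun h => h0 (h ▸ hmem)
    have hne1 : sInf S ≠ 1 := fun h => h1 (h ▸ hmem)
    omega
  · -- answer 1
    rw [if_neg h3]
    have h1 : 1 ∈ S := by
      refine ⟨{s((⟨0, by omega⟩ : Fin n), (⟨1, by omega⟩ : Fin n))}, ?_, ?_,
        Finset.card_singleton _⟩
      · intro e he
        simp only [Finset.coe_singleton, Set.mem_singleton_iff] at he
        subst he
        exact (SimpleGraph.mem_edgeSet _).2 (pathGraph_adj.2 (Or.inl rfl))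
      · rw [hdp]
        have := domNum_A hn
        simp only [Finset.coe_singleton] at this ⊢
        rw [this]
        omega
    have hne : S.Nonempty := ⟨1, h1⟩
    have hmem := Nat.sInf_mem hne
    have hle := Nat.sInf_le h1
    have hne0 : sInf S ≠ 0 := fun h => h0 (h ▸ hmem)
    omega
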